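/- arXiv:1212.2923 — 3 statements merged into one kernel-verified Lean document; each statement's English description precedes it below -/
import Mathlib

section
/- Let R be a commutative ring, M an R-module, q a natural number, x : Fin q → M a family of elements of M, d : Fin q → ℕ, and w : Fin q → ExteriorAlgebra R M a family of elements with w i ∈ ⋀[R]^{d i} M for every i. Then, with all products taken in increasing order of the index i, ∏_{i=0}^{q−1} (ι(x i) · (w i)) = (−1)^{Σ_{i=0}^{q−1} (q−1−i)·(d i)} · (∏_{i=0}^{q−1} ι(x i)) · (∏_{i=0}^{q−1} (w i)) in ExteriorAlgebra R M. -/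
open ExteriorAlgebra

lemma aux_neg_pow {A : Type*} [Ring A] (i : ℕ) (u v : A) :
    u * ((-1 : A) ^ i * v) = (-1 : A) ^ i * (u * v) := by
  rw [← mul_assoc, ← ((Commute.neg_one_left u).pow_left i).eq, mul_assoc]

lemma aux_comm_ι {R M : Type*} [CommRing R] [AddCommGroup M] [Module R M] {n : ℕ}
    {w : ExteriorAlgebra R M} (hw : w ∈ ⋀[R]^n M) (m : M) :
    w * ι R m = (-1 : ExteriorAlgebra R M) ^ n * (ι R m * w) := by
  refine Submodule.pow_induction_on_left' (M := LinearMap.range (ι R : M →ₗ[R] _))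
    (C := fun i a _ => a * ι R m = (-1 : ExteriorAlgebra R M) ^ i * (ι R m * a))
    ?_ ?_ ?_ hw
  · intro r
    rw [pow_zero, one_mul, Algebra.commutes]
  · intro a b i ha hb iha ihb
    rw [add_mul, mul_add, iha, ihb, mul_add]
  · rintro _ ⟨m', rfl⟩ i a ha ih
    have h1 : ι R m' * ι R m = -(ι R m * ι R m') :=
      eq_neg_of_add_eq_zero_left (ι_add_mul_swap m' m)
    calc ι R m' * a * ι R m = ι R m' * (a * ι R m) := mul_assoc _ _ _
      _ = ι R m' * ((-1 : ExteriorAlgebra R M) ^ i * (ι R m * a)) := by rw [ih]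
      _ = (-1 : ExteriorAlgebra R M) ^ i * (ι R m' * (ι R m * a)) := aux_neg_pow _ _ _
      _ = (-1 : ExteriorAlgebra R M) ^ i * ((ι R m' * ι R m) * a) := by rw [mul_assoc]
      _ = (-1 : ExteriorAlgebra R M) ^ (i + 1) * (ι R m * (ι R m' * a)) := by
          rw [h1, pow_succ]
          simp [mul_assoc, neg_mul, mul_neg]

lemma aux_comm_prod {R M : Type*} [CommRing R] [AddCommGroup M] [Module R M] {n : ℕ}
    {w : ExteriorAlgebra R M} (hw : w ∈ ⋀[R]^n M) (q : ℕ) (x : Fin q → M) :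
    w * (List.ofFn fun i => ι R (x i)).prod =
      (-1 : ExteriorAlgebra R M) ^ (n * q) * ((List.ofFn fun i => ι R (x i)).prod * w) := by
  induction q with
  | zero => simp
  | succ q ih =>
    rw [List.ofFn_succ, List.prod_cons]
    calc w * (ι R (x 0) * (List.ofFn fun i => ι R (x i.succ)).prod)
        = (w * ι R (x 0)) * (List.ofFn fun i => ι R (x i.succ)).prod := (mul_assoc _ _ _).symm
      _ = ((-1 : ExteriorAlgebra R M) ^ n * (ι R (x 0) * w)) *
            (List.ofFn fun i => ι R (x i.succ)).prod := by rw [aux_comm_ι hw]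
      _ = (-1 : ExteriorAlgebra R M) ^ n *
            (ι R (x 0) * (w * (List.ofFn fun i => ι R (x i.succ)).prod)) := by
          simp [mul_assoc]
      _ = (-1 : ExteriorAlgebra R M) ^ n *
            (ι R (x 0) * ((-1 : ExteriorAlgebra R M) ^ (n * q) *
              ((List.ofFn fun i => ι R (x i.succ)).prod * w))) := by
          rw [ih (fun i => x i.succ)]
      _ = (-1 : ExteriorAlgebra R M) ^ (n * (q + 1)) *
            (ι R (x 0) * (List.ofFn fun i => ι R (x i.succ)).prod * w) := by
          rw [aux_neg_pow, ← mul_assoc, ← pow_add, mul_assoc]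
          congr 2
          ring

/-- Interleaving sign in the exterior algebra: moving each degree-one factor `ι (x i)` to the
front of the product of the `w i`'s (where `w i` has degree `d i`) produces the sign
`(−1)^{Σ_{i} (q−1−i)·(d i)}`. -/
theorem stmt_5 {R M : Type*} [CommRing R] [AddCommGroup M] [Module R M] (q : ℕ)
    (x : Fin q → M) (d : Fin q → ℕ) (w : Fin q → ExteriorAlgebra R M)
    (hw : ∀ i, w i ∈ ⋀[R]^(d i) M) :
    (List.ofFn fun i => ExteriorAlgebra.ι R (x i) * w i).prod =
      (-1 : ExteriorAlgebra R M) ^ (∑ i : Fin q, (q - 1 - (i : ℕ)) * d i) *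
        ((List.ofFn fun i => ExteriorAlgebra.ι R (x i)).prod * (List.ofFn w).prod) := by
  induction q with
  | zero => simp
  | succ q ih =>
    have key := ih (fun i => x i.succ) (fun i => d i.succ) (fun i => w i.succ)
      (fun i => hw i.succ)
    have hsum : (∑ i : Fin (q + 1), (q + 1 - 1 - (i : ℕ)) * d i) =
        q * d 0 + ∑ i : Fin q, (q - 1 - (i : ℕ)) * d i.succ := by
      have h1 : ∀ i : Fin q, (q + 1 - 1 - (i.succ : ℕ)) * d i.succ =
          (q - 1 - (i : ℕ)) * d i.succ := fun i => by congr 1; simp only [Fin.val_succ]; omega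
      rw [Fin.sum_univ_succ, Finset.sum_congr rfl (fun i _ => h1 i)]
      simp
    rw [hsum, List.ofFn_succ, List.prod_cons, key, List.ofFn_succ (f := fun i =>
      ExteriorAlgebra.ι R (x i)), List.prod_cons, List.ofFn_succ (f := w), List.prod_cons]
    set P := (List.ofFn fun i => ι R (x i.succ)).prod with hP
    set W := (List.ofFn fun i => w i.succ).prod with hW
    set S := ∑ i : Fin q, (q - 1 - (i : ℕ)) * d i.succ with hS
    have hcomm := aux_comm_prod (hw 0) q (fun i => x i.succ)
    calc ι R (x 0) * w 0 * ((-1 : ExteriorAlgebra R M) ^ S * (P * W))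
        = (-1 : ExteriorAlgebra R M) ^ S * (ι R (x 0) * w 0 * (P * W)) := aux_neg_pow _ _ _
      _ = (-1 : ExteriorAlgebra R M) ^ S * (ι R (x 0) * ((w 0 * P) * W)) := by
          simp [mul_assoc]
      _ = (-1 : ExteriorAlgebra R M) ^ S *
            (ι R (x 0) * (((-1 : ExteriorAlgebra R M) ^ (d 0 * q) * (P * w 0)) * W)) := by
          rw [hcomm]
      _ = (-1 : ExteriorAlgebra R M) ^ (q * d 0 + S) *
            (ι R (x 0) * P * (w 0 * W)) := by
          rw [mul_assoc ((-1 : ExteriorAlgebra R M) ^ (d 0 * q)), aux_neg_pow, aux_neg_pow,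
            ← mul_assoc, ← pow_add, show d 0 * q + S = q * d 0 + S from by ring]
          simp only [mul_assoc]
end

section
/- Let X and Y be topological additive groups (additive groups equipped with topologies making addition and negation continuous). Let R : X → Y be a continuous additive group homomorphism admitting a continuous additive group homomorphism E : Y → X as a right inverse, i.e. R ∘ E is the identity of Y. Then for every residual (comeagre) subset S of Y, the preimage R⁻¹(S) is residual in X. -/
/-- If a continuous additive group homomorphism `R` admits a continuous additive group
homomorphism `E` as a right inverse, then the preimage under `R` of a residual (comeagre)
set is residual. -/
theorem stmt_8 {X Y : Type*} [AddGroup X] [TopologicalSpace X] [IsTopologicalAddGroup X]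
    [AddGroup Y] [TopologicalSpace Y] [IsTopologicalAddGroup Y]
    (R : X →+ Y) (E : Y →+ X) (hR : Continuous R) (hE : Continuous E)
    (hRE : ∀ y, R (E y) = y) (S : Set Y) (hS : S ∈ residual Y) :
    (⇑R) ⁻¹' S ∈ residual X := by
  have key : ∀ D : Set Y, Dense D → Dense ((⇑R) ⁻¹' D) := by
    intro D hD
    rw [dense_iff_inter_open]
    intro V hV ⟨x, hx⟩
    -- consider f : Y → X, y ↦ x - E (R x) + E y; f (R x) = x, R (f y) = y
    set f : Y → X := fun y => x - E (R x) + E y with hf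
    have hfc : Continuous f := by continuity
    have hfRx : f (R x) = x := by simp [hf]
    have hfo : IsOpen (f ⁻¹' V) := hV.preimage hfc
    have hne : (f ⁻¹' V).Nonempty := ⟨R x, by simp [hfRx, hx]⟩
    obtain ⟨d, hdV, hdD⟩ := hD.inter_open_nonempty _ hfo hne
    refine ⟨f d, hdV, ?_⟩
    simpa [hf, hRE, Set.mem_preimage] using hdD
  rw [mem_residual_iff] at hS ⊢
  obtain ⟨T, hTo, hTd, hTc, hTs⟩ := hS
  refine ⟨(fun t => (⇑R) ⁻¹' t) '' T, ?_, ?_, hTc.image _, ?_⟩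
  · rintro _ ⟨t, ht, rfl⟩; exact (hTo t ht).preimage hR
  · rintro _ ⟨t, ht, rfl⟩; exact key t (hTd t ht)
  · rw [Set.sInter_image]
    intro x hx
    exact hTs (by simpa using hx)
end

section
/- Let n be a natural number and let V be an ℝ-submodule of ℂⁿ = (Fin n → ℂ) such that V ⊓ J(V) = ⊥ and V ⊔ J(V) = ⊤, where J is the ℝ-linear endomorphism of ℂⁿ given by multiplication by the imaginary unit. Then there exists a ℂ-linear automorphism g of ℂⁿ such that the image under g of the standard real subspace ℝⁿ = {v : Fin n → ℂ | every coordinate of v has imaginary part 0} (a ℝ-submodule of ℂⁿ) equals V. -/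
/-- The ℝ-linear endomorphism of `ℂⁿ = Fin n → ℂ` given by coordinatewise multiplication by
the imaginary unit `i`. -/
noncomputable def mulI (n : ℕ) : (Fin n → ℂ) →ₗ[ℝ] (Fin n → ℂ) :=
  (LinearMap.lsmul ℂ (Fin n → ℂ) Complex.I).restrictScalars ℝ

/-- The standard real subspace `ℝⁿ ⊆ ℂⁿ` of vectors all of whose coordinates have imaginary
part `0`, as an ℝ-submodule of `Fin n → ℂ`. -/
noncomputable def realSubspace (n : ℕ) : Submodule ℝ (Fin n → ℂ) where
  carrier := {v | ∀ i, (v i).im = 0}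
  add_mem' := by
    intro u v hu hv i
    simp [Complex.add_im, hu i, hv i]
  zero_mem' := by
    intro i
    simp
  smul_mem' := by
    intro r v hv i
    simp [Complex.smul_im, hv i]

/-- Transitivity of the `GL_n(ℂ)`-action on real boundary conditions: every ℝ-subspace `V`
of `ℂⁿ` with `iV ⊕ V = ℂⁿ` is the image of the standard real subspace `ℝⁿ` under some
ℂ-linear automorphism of `ℂⁿ`. -/
theorem stmt_10 (n : ℕ) (V : Submodule ℝ (Fin n → ℂ))
    (h₁ : V ⊓ Submodule.map (mulI n) V = ⊥)
    (h₂ : V ⊔ Submodule.map (mulI n) V = ⊤) :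
    ∃ g : (Fin n → ℂ) ≃ₗ[ℂ] (Fin n → ℂ),
      Submodule.map (g.toLinearMap.restrictScalars ℝ) (realSubspace n) = V := by

  classical
  have hmulI : ∀ v : Fin n → ℂ, mulI n v = Complex.I • v := fun v => rfl
  -- injectivity of mulI
  have hinj : Function.Injective (mulI n) := by
    intro x y hxy
    have := congrArg (fun v => Complex.I⁻¹ • v) hxy
    simpa [hmulI, smul_smul, Complex.I_ne_zero] using this
  -- finrank of V is n
  have hrk_map : Module.finrank ℝ (Submodule.map (mulI n) V) = Module.finrank ℝ V :=
    (Submodule.equivMapOfInjective _ hinj V).symm.finrank_eq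
  have hamb : Module.finrank ℝ (Fin n → ℂ) = 2 * n := by
    simp [Module.finrank_pi_fintype, Complex.finrank_real_complex, Nat.mul_comm]
  have hdim : Module.finrank ℝ V = n := by
    have h := Submodule.finrank_sup_add_finrank_inf_eq V (Submodule.map (mulI n) V)
    rw [h₁, h₂] at h
    simp [hamb, hrk_map] at h
    omega
  obtain ⟨b⟩ : Nonempty (Module.Basis (Fin n) ℝ V) :=
    ⟨Module.finBasisOfFinrankEq ℝ V hdim⟩
  set S : Set (Fin n → ℂ) := Set.range fun j => (b j : Fin n → ℂ) with hS
  have hVspan : Submodule.span ℝ S = V := by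
    have : S = V.subtype '' Set.range b := by
      rw [hS, ← Set.range_comp]; rfl
    rw [this, Submodule.span_image, b.span_eq, Submodule.map_top, Submodule.range_subtype]
  -- the candidate linear map
  set f : (Fin n → ℂ) →ₗ[ℂ] (Fin n → ℂ) :=
    (Pi.basisFun ℂ (Fin n)).constr ℂ (fun j => (b j : Fin n → ℂ)) with hf
  have hfapply : ∀ v : Fin n → ℂ, f v = ∑ j, v j • (b j : Fin n → ℂ) := by
    intro v
    rw [hf, Module.Basis.constr_apply_fintype]
    simp [Pi.basisFun_equivFun]
  -- range of f is everything
  have hrange : LinearMap.range f = ⊤ := by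
    rw [hf, Module.Basis.constr_range]
    rw [eq_top_iff]
    have hVle : (V : Set (Fin n → ℂ)) ⊆ ↑(Submodule.span ℂ S) := by
      rw [← hVspan]
      intro x hx
      exact Submodule.span_le_restrictScalars ℝ ℂ S hx
    have hle : V ⊔ Submodule.map (mulI n) V ≤ (Submodule.span ℂ S).restrictScalars ℝ := by
      apply sup_le
      · intro y hy; exact hVle hy
      · rintro y ⟨z, hz, rfl⟩
        rw [hmulI]
        exact Submodule.smul_mem (Submodule.span ℂ S) Complex.I (hVle hz)
    intro x _
    exact hle (by rw [h₂]; trivial)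
  have hbij : Function.Bijective f := by
    have hsurj : Function.Surjective f := LinearMap.range_eq_top.mp hrange
    exact ⟨(LinearMap.injective_iff_surjective).mpr hsurj, hsurj⟩
  refine ⟨LinearEquiv.ofBijective f hbij, ?_⟩
  apply le_antisymm
  · rintro _ ⟨v, hv, rfl⟩
    have : f v ∈ V := by
      rw [hfapply]
      refine Submodule.sum_mem _ fun j _ => ?_
      have hvj : v j = ((v j).re : ℂ) := Complex.ext (by simp) (by simp [hv j])
      rw [hvj]
      have : ((v j).re : ℂ) • (b j : Fin n → ℂ) = (v j).re • (b j : Fin n → ℂ) := by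
        rw [← algebraMap_smul ℂ ((v j).re) ((b j : Fin n → ℂ))]; rfl
      rw [this]
      exact Submodule.smul_mem _ _ (b j).2
    exact this
  · intro v hv
    set c := b.repr ⟨v, hv⟩ with hc
    refine ⟨fun j => ((c j : ℝ) : ℂ), fun i => by simp, ?_⟩
    show f _ = v
    rw [hfapply]
    have : ∑ j, ((c j : ℝ) : ℂ) • (b j : Fin n → ℂ) = ∑ j, (c j : ℝ) • (b j : Fin n → ℂ) := by
      refine Finset.sum_congr rfl fun j _ => ?_
      rw [← algebraMap_smul ℂ (c j) ((b j : Fin n → ℂ))]; rfl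
    rw [this]
    have hrepr : (⟨v, hv⟩ : V) = ∑ j, c j • b j := by
      rw [hc]; exact (b.sum_repr ⟨v, hv⟩).symm
    calc ∑ j, (c j : ℝ) • (b j : Fin n → ℂ)
        = ((∑ j, c j • b j : V) : Fin n → ℂ) := by push_cast; rfl
      _ = v := by rw [← hrepr]
end
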